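/- In a finite directed acyclic graph in which |rel(a)| < |rel(b)| holds for every edge (a,b), if a non-root vertex y has a parent c that is adjacent to all other parents of y, then y has at least two parents that are endpoints of unshielded colliders centered at y (i.e., |D_y| ≥ 2). -/

import Mathlib

open Relation

def ancSet {V : Type*} (E : V → V → Prop) (v : V) : Set V :=
  {x | ReflTransGen E x v}

def descSet {V : Type*} (E : V → V → Prop) (v : V) : Set V :=
  {z | ReflTransGen E v z}

def relSet {V : Type*} (E : V → V → Prop) (v : V) : Set V :=
  ⋃ x ∈ ancSet E v, descSet E x

def Adj {V : Type*} (E : V → V → Prop) (a b : V) : Prop := E a b ∨ E b a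

def IsAcyclicRel {V : Type*} (E : V → V → Prop) : Prop :=
  ∀ v, ¬ TransGen E v v

/-- Parents of `y` having another parent of `y` not adjacent to them
(endpoints of unshielded colliders centered at `y`). -/
def DSet {V : Type*} (E : V → V → Prop) (y : V) : Set V :=
  {x | E x y ∧ ∃ z, E z y ∧ z ≠ x ∧ ¬ Adj E x z}

lemma mem_relSet_of_anc {V : Type*} (E : V → V → Prop) {m x w : V}
    (hx : ReflTransGen E x m) (hw : ReflTransGen E x w) : w ∈ relSet E m := by
  exact Set.mem_biUnion hx hw

/-- If relatives strictly increase along every edge and a non-root `y` has a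
parent `c` adjacent to all other parents of `y`, then `|D_y| ≥ 2`. -/
theorem DSet_ncard_ge_two {V : Type*} [Fintype V] (E : V → V → Prop)
    (hacyc : IsAcyclicRel E)
    (hrel : ∀ a b, E a b → (relSet E a).ncard < (relSet E b).ncard)
    (y c : V) (hc : E c y) (hcadj : ∀ z, E z y → z ≠ c → Adj E c z) :
    2 ≤ (DSet E y).ncard := by
  by_cases h : ∃ x z, E x y ∧ E z y ∧ x ≠ z ∧ ¬ Adj E x z
  · obtain ⟨x, z, hx, hz, hne, hnadj⟩ := h
    have hxD : x ∈ DSet E y := ⟨hx, z, hz, hne.symm, hnadj⟩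
    have hzD : z ∈ DSet E y := ⟨hz, x, hx, hne, fun ha => hnadj ha.symm⟩
    have hfin : (DSet E y).Finite := Set.toFinite _
    rw [show (2:ℕ) = 1 + 1 by rfl]
    exact (Set.one_lt_ncard hfin).mpr ⟨x, hxD, z, hzD, hne⟩
  · push_neg at h
    -- all distinct parents are adjacent; derive a contradiction
    exfalso
    have hne : ({p | E p y} : Set V).Nonempty := ⟨c, hc⟩
    obtain ⟨m, hm, hmax⟩ := Set.Finite.exists_maximalFor
      (fun p => (relSet E p).ncard) _ (Set.toFinite {p | E p y}) hne
    simp only [Set.mem_setOf_eq] at hm hmax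
    -- every parent z satisfies rel(z) ⊆ rel(m)
    have hkey : ∀ z, E z y → ancSet E z ⊆ ancSet E m := by
      intro z hz
      rcases eq_or_ne z m with rfl | hzm
      · exact subset_rfl
      · rcases h z m hz hm hzm with hzm' | hmz'
        · intro x hx
          exact ReflTransGen.tail hx hzm'
        · exact absurd (hmax hz (le_of_lt (hrel m z hmz'))) (not_le.mpr (hrel m z hmz'))
    have hsub : relSet E y ⊆ relSet E m := by
      intro w hw
      simp only [relSet, Set.mem_iUnion] at hw
      obtain ⟨x, hx, hwx⟩ := hw
      rcases ReflTransGen.cases_tail hx with rfl | ⟨p, hxp, hpy⟩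
      · -- x = y : descendants of y are descendants of m
        exact mem_relSet_of_anc E ReflTransGen.refl
          (ReflTransGen.trans (ReflTransGen.single hm) hwx)
      · exact mem_relSet_of_anc E (hkey p hpy hxp) hwx
    have : (relSet E y).ncard ≤ (relSet E m).ncard :=
      Set.ncard_le_ncard hsub (Set.toFinite _)
    exact absurd (hrel m y hm) (not_lt.mpr this)
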